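/- For every integer k ≥ 1 there exist polynomials T_{k,1}, …, T_{k,2k} ∈ ℚ[y], each of degree at most k, such that for every formal power series f ∈ ℚ⟦y⟧ one has in ℚ⟦x⟧: (1 − 108w)^{4k} · D^{2k}( f(w) ) = Σ_{i=1}^{2k} T_{k,i}(w) · (1 − 108w)^{i} · f^{(i)}(w), where f(w) and f^{(i)}(w) denote substitution of w into f and into its i-th formal derivative (well defined since w has zero constant term), and D^{2k} is the (2k)-th formal derivative with respect to x. -/

import Mathlib

open PowerSeries

/-- The formal derivative `d/dx` on `ℚ⟦x⟧`. -/
noncomputable def D : PowerSeries ℚ → PowerSeries ℚ := PowerSeries.derivativeFun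

/-- Substitution of a power series `w` with zero constant term into a power series `f`:
the `n`-th coefficient of `f(w)` only depends on the truncation of `f` at order `n + 1`. -/
noncomputable def psSubst (w f : PowerSeries ℚ) : PowerSeries ℚ :=
  PowerSeries.mk fun n => PowerSeries.coeff n (Polynomial.aeval w (PowerSeries.trunc (n + 1) f))

namespace Stmt1Aux
open Polynomial

lemma D_add (f g : ℚ⟦X⟧) : D (f + g) = D f + D g := derivativeFun_add f g
lemma D_mul (f g : ℚ⟦X⟧) : D (f * g) = f * D g + g * D f := by
  exact (derivative ℚ).leibniz f g
lemma D_one : D (1 : ℚ⟦X⟧) = 0 := derivativeFun_one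
lemma D_C (r : ℚ) : D (PowerSeries.C r) = 0 := derivative_C
lemma D_X : D (X : ℚ⟦X⟧) = 1 := PowerSeries.derivative_X (R := ℚ)
lemma D_natCast (n : ℕ) : D (n : ℚ⟦X⟧) = 0 := by
  rw [← map_natCast (PowerSeries.C : ℚ →+* ℚ⟦X⟧) n]; exact derivative_C
lemma D_ofNat (n : ℕ) [n.AtLeastTwo] : D (OfNat.ofNat n : ℚ⟦X⟧) = 0 := by
  rw [show (OfNat.ofNat n : ℚ⟦X⟧) = PowerSeries.C (OfNat.ofNat n : ℚ) from (map_ofNat _ n).symm]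
  exact derivative_C
lemma D_sub (f g : ℚ⟦X⟧) : D (f - g) = D f - D g := by
  ext n
  exact congrArg (PowerSeries.coeff n) (map_sub (derivative ℚ) f g)
lemma D_sq (f : ℚ⟦X⟧) : D (f^2) = 2*f*D f := by
  rw [pow_two, D_mul]; ring
lemma D_cube (f : ℚ⟦X⟧) : D (f^3) = 3*f^2*D f := by
  rw [pow_succ, D_mul, D_sq]; ring
lemma D_sum {α : Type*} (s : Finset α) (F : α → ℚ⟦X⟧) :
    D (∑ i ∈ s, F i) = ∑ i ∈ s, D (F i) := by
  classical
  induction s using Finset.induction_on with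
  | empty => simpa using D_C 0
  | insert _ _ h ih => rw [Finset.sum_insert h, Finset.sum_insert h, D_add, ih]
lemma coeff_D (f : ℚ⟦X⟧) (n : ℕ) : coeff n (D f) = coeff (n+1) f * (n+1) :=
  coeff_derivative f n
lemma D_pow (f : ℚ⟦X⟧) (n : ℕ) : D (f ^ (n+1)) = (n+1 : ℚ⟦X⟧) * f ^ n * D f := by
  induction n with
  | zero => rw [pow_one, pow_zero]; norm_num
  | succ n ih =>
    rw [pow_succ, D_mul, ih]
    push_cast
    ring

variable {w : ℚ⟦X⟧}

lemma coeff_w_pow (hw0 : PowerSeries.constantCoeff w = 0) {n m : ℕ} (h : n < m) :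
    coeff n (w ^ m) = 0 := by
  have hd : (X : ℚ⟦X⟧) ^ m ∣ w ^ m := pow_dvd_pow_of_dvd (X_dvd_iff.mpr hw0) m
  exact X_pow_dvd_iff.mp hd n h

lemma coeff_psSubst (hw0 : PowerSeries.constantCoeff w = 0) (f : ℚ⟦X⟧) {n N : ℕ} (hn : n < N) :
    coeff n (psSubst w f) = coeff n (aeval w (trunc N f)) := by
  obtain ⟨t, rfl⟩ : ∃ t, N = (n + 1) + t := ⟨N - (n+1), by omega⟩
  clear hn
  induction t with
  | zero => simp [psSubst, coeff_mk]
  | succ t ih =>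
    have h0 : coeff n ((aeval w) (Polynomial.monomial (n+1+t) (coeff (n+1+t) f))) = 0 := by
      rw [← Polynomial.smul_X_eq_monomial, map_smul, map_pow, aeval_X, map_smul,
        coeff_w_pow hw0 (show n < n+1+t by omega), smul_zero]
    rw [show n+1+(t+1) = (n+1+t)+1 from rfl, trunc_succ, map_add, map_add, h0, add_zero, ih]

lemma D_aeval (c : Polynomial ℚ) : D (aeval w c) = aeval w (derivative c) * D w := by
  induction c using Polynomial.induction_on' with
  | add p q hp hq =>
    rw [map_add, map_add, map_add, add_mul, ← hp, ← hq]
    exact derivativeFun_add _ _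
  | monomial m a =>
    cases m with
    | zero =>
      rw [← Polynomial.smul_X_eq_monomial]
      simp only [pow_zero, map_smul, map_one, derivative_smul, Polynomial.derivative_one, smul_zero,
        map_zero, zero_mul]
      show derivativeFun (a • 1) = 0
      rw [derivativeFun_smul, derivativeFun_one, smul_zero]
    | succ m =>
      rw [← Polynomial.smul_X_eq_monomial, map_smul, map_pow, aeval_X,
        show D = derivativeFun from rfl, derivativeFun_smul,
        show (derivativeFun (w ^ (m+1))) = D (w^(m+1)) from rfl, D_pow,
        derivative_smul, derivative_X_pow]
      simp only [D, Nat.add_sub_cancel, map_smul, map_mul, aeval_C, map_pow, aeval_X,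
        PowerSeries.smul_eq_C_mul,
        show ∀ r : ℚ, algebraMap ℚ ℚ⟦X⟧ r = PowerSeries.C r from fun _ => rfl, map_natCast]
      push_cast
      ring

lemma coeff_mul_congr {a b c : ℚ⟦X⟧} {n : ℕ}
    (h : ∀ m ≤ n, coeff m a = coeff m b) : coeff n (a * c) = coeff n (b * c) := by
  rw [PowerSeries.coeff_mul, PowerSeries.coeff_mul]
  refine Finset.sum_congr rfl fun p hp => ?_
  rw [h p.1 (Finset.HasAntidiagonal.antidiagonal.fst_le hp)]

lemma chain (hw0 : PowerSeries.constantCoeff w = 0) (f : ℚ⟦X⟧) :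
    D (psSubst w f) = psSubst w (D f) * D w := by
  ext n
  have h1 : coeff n (D (psSubst w f)) = coeff n (D (aeval w (trunc (n+2) f))) := by
    rw [coeff_D, coeff_D, coeff_psSubst hw0 f (N := n+2) (by omega)]
  have h2 : D (aeval w (trunc (n+2) f)) = aeval w (trunc (n+1) (D f)) * D w := by
    rw [D_aeval, show n+2 = (n+1)+1 from rfl, ← trunc_derivativeFun]
    rfl
  have h3 : coeff n (aeval w (trunc (n+1) (D f)) * D w) = coeff n (psSubst w (D f) * D w) :=
    coeff_mul_congr fun m hm => (coeff_psSubst hw0 (D f) (N := n+1) (by omega)).symm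
  rw [h1, h2, h3]

/-- coefficient polynomials -/
noncomputable def phi0 (c : ℚ[X]) (m : ℕ) : ℚ[X] :=
  ((1-72*Polynomial.X)*(1-108*Polynomial.X)^2) * (derivative (derivative c))
  + (((72-3888*Polynomial.X) + 216*(m:ℚ[X])*(1-72*Polynomial.X))*(1-108*Polynomial.X)) * derivative c
  + (108*(m:ℚ[X])*((72-3888*Polynomial.X) + 108*((m:ℚ[X])+1)*(1-72*Polynomial.X))) * c

noncomputable def phi1 (c : ℚ[X]) (m : ℕ) : ℚ[X] :=
  ((72-3888*Polynomial.X) + 216*(m:ℚ[X])*(1-72*Polynomial.X)) * c + (2*((1-72*Polynomial.X)*(1-108*Polynomial.X))) * derivative c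

noncomputable def phi2 (c : ℚ[X]) : ℚ[X] := (1-72*Polynomial.X) * c

lemma key (w v : ℚ⟦X⟧)
    (huv : (1-108*w) * v = 1)
    (he : D w * D w = (1-72*w) * (v*v))
    (hDe : D (D w) = (72-3888*w) * (v*(v*v)))
    (hDv : D v = 108 * D w * (v*v))
    (c : Polynomial ℚ) (i m : ℕ)
    (g g1 g2 : ℚ⟦X⟧) (hg : D g = D w * g1) (hg1 : D g1 = D w * g2) :
    (1-108*w)^(m+i+4) * D (D (v^(m+i) * (aeval w c * (1-108*w)^i * g))) =
      aeval w (phi0 c m) * (1-108*w)^i * g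
      + aeval w (phi1 c m) * (1-108*w)^(i+1) * g1
      + aeval w (phi2 c) * (1-108*w)^(i+2) * g2 := by
  have hpow : ∀ t : ℕ, (1-108*w)^t * v^t = 1 := fun t => by rw [← mul_pow, huv, one_pow]
  have hDvpow : ∀ t : ℕ, D (v^t) = ((108*t : ℕ):ℚ⟦X⟧)*(D w*v^(t+1)) := by
    intro t
    induction t with
    | zero => simpa using D_one
    | succ t ih =>
      rw [pow_succ, D_mul, ih, hDv]
      push_cast
      ring
  have hA : v^(m+i) * (aeval w c * (1-108*w)^i * g) = aeval w c * (v^m * g) := by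
    linear_combination (aeval w c * v^m * g) * hpow i
  rw [hA]
  have haeval0 : aeval w (phi0 c m) =
      ((1-72*w)*(1-108*w)^2) * (aeval w (derivative (derivative c)))
      + (((72-3888*w) + 216*(m:ℚ⟦X⟧)*(1-72*w))*(1-108*w)) * aeval w (derivative c)
      + (108*(m:ℚ⟦X⟧)*((72-3888*w) + 108*((m:ℚ⟦X⟧)+1)*(1-72*w))) * aeval w c := by
    simp [phi0, map_ofNat]
  have haeval1 : aeval w (phi1 c m) =
      ((72-3888*w) + 216*(m:ℚ⟦X⟧)*(1-72*w)) * aeval w c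
      + (2*((1-72*w)*(1-108*w))) * aeval w (derivative c) := by
    simp [phi1, map_ofNat]
  have haeval2 : aeval w (phi2 c) = (1-72*w) * aeval w c := by
    simp [phi2, map_ofNat]
  rw [haeval0, haeval1, haeval2]
  simp only [D_mul, D_add, hDvpow, D_aeval, hg, hg1, hDe, hDv, D_natCast, D_ofNat]
  push_cast
  linear_combination
    ((1-108*w)^(m+i+4) * (v^m*(aeval w (derivative (derivative c))*g + 2*(aeval w (derivative c))*g1
        + 108*(m:ℚ⟦X⟧)*(aeval w (derivative c)*(v*g) + 108*(aeval w c*(v*(v*g))) + aeval w c*(v*g1))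
        + aeval w c*g2)
      + 108*(m:ℚ⟦X⟧)*v^(m+1)*(aeval w (derivative c)*g + 108*(m:ℚ⟦X⟧)*(aeval w c*(v*g)) + aeval w c*g1))) * he
    + ((1-108*w)^(i+1)*((72-3888*w)+108*(m:ℚ⟦X⟧)*(1-72*w))*(aeval w (derivative c)*g
        + 108*(m:ℚ⟦X⟧)*(aeval w c*(v*g)) + aeval w c*g1)) * hpow (m+3)
    + ((1-108*w)^(i+2)*(1-72*w)*(aeval w (derivative (derivative c))*g + 2*(aeval w (derivative c))*g1
        + 108*(m:ℚ⟦X⟧)*(aeval w (derivative c)*(v*g) + 108*(aeval w c*(v*(v*g))) + aeval w c*(v*g1))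
        + aeval w c*g2)) * hpow (m+2)
    + (108*(m:ℚ⟦X⟧)*((72-3888*w)+108*(m:ℚ⟦X⟧)*(1-72*w))*(aeval w c)*(1-108*w)^i*g
      + 108*(m:ℚ⟦X⟧)*(1-72*w)*(aeval w (derivative c))*(1-108*w)^(i+1)*g
      + 108^2*(m:ℚ⟦X⟧)*(1-72*w)*(aeval w c)*((1-108*w)*v+1)*(1-108*w)^i*g
      + 108*(m:ℚ⟦X⟧)*(1-72*w)*(aeval w c)*(1-108*w)^(i+1)*g1) * huv


lemma natDegree_le_mul {a c : ℚ[X]} {s t : ℕ} (ha : a.natDegree ≤ s) (hc : c.natDegree ≤ t) :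
    (a*c).natDegree ≤ s + t := natDegree_mul_le.trans (add_le_add ha hc)

lemma phi0_zero (m : ℕ) : phi0 0 m = 0 := by simp [phi0]
lemma phi1_zero (m : ℕ) : phi1 0 m = 0 := by simp [phi1]
lemma phi2_zero : phi2 0 = 0 := by simp [phi2]

lemma deg_phi0 {k : ℕ} (hk : 1 ≤ k) {c : ℚ[X]} (hc : c.natDegree ≤ k) (m : ℕ) :
    (phi0 c m).natDegree ≤ k + 1 := by
  have h3 : (((1:ℚ[X])-72*Polynomial.X)*(1-108*Polynomial.X)^2).natDegree ≤ 3 := by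
    compute_degree
  have h2 : ((((72:ℚ[X])-3888*Polynomial.X) + 216*(m:ℚ[X])*(1-72*Polynomial.X))
      *(1-108*Polynomial.X)).natDegree ≤ 2 := by
    compute_degree
  have h1 : (108*(m:ℚ[X])*((72-3888*Polynomial.X)
      + 108*((m:ℚ[X])+1)*(1-72*Polynomial.X))).natDegree ≤ 1 := by
    compute_degree
  refine (natDegree_add_le _ _).trans (max_le ((natDegree_add_le _ _).trans
    (max_le ?_ ?_)) ?_)
  · rcases le_or_gt k 1 with hk1 | hk1
    · have hd : (derivative c).natDegree = 0 :=
        le_antisymm ((natDegree_derivative_le c).trans (by omega)) (Nat.zero_le _)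
      obtain ⟨a, ha⟩ := Polynomial.natDegree_eq_zero.mp hd
      rw [← ha, Polynomial.derivative_C, mul_zero]
      simp
    · have hdd : (derivative (derivative c)).natDegree ≤ k-2 := by
        have := natDegree_derivative_le (derivative c)
        have := natDegree_derivative_le c
        omega
      exact (natDegree_le_mul h3 hdd).trans (by omega)
  · have hd : (derivative c).natDegree ≤ k-1 := (natDegree_derivative_le c).trans (by omega)
    exact (natDegree_le_mul h2 hd).trans (by omega)
  · exact (natDegree_le_mul h1 hc).trans (by omega)

lemma deg_phi1 {k : ℕ} (hk : 1 ≤ k) {c : ℚ[X]} (hc : c.natDegree ≤ k) (m : ℕ) :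
    (phi1 c m).natDegree ≤ k + 1 := by
  have h1 : ((((72:ℚ[X])-3888*Polynomial.X) + 216*(m:ℚ[X])*(1-72*Polynomial.X))).natDegree ≤ 1 := by
    compute_degree
  have h2 : ((2:ℚ[X])*((1-72*Polynomial.X)*(1-108*Polynomial.X))).natDegree ≤ 2 := by
    compute_degree
  refine (natDegree_add_le _ _).trans (max_le ?_ ?_)
  · exact (natDegree_le_mul h1 hc).trans (by omega)
  · have hd : (derivative c).natDegree ≤ k-1 := (natDegree_derivative_le c).trans (by omega)
    exact (natDegree_le_mul h2 hd).trans (by omega)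

lemma deg_phi2 {k : ℕ} {c : ℚ[X]} (hc : c.natDegree ≤ k) : (phi2 c).natDegree ≤ k + 1 := by
  have h1 : ((1:ℚ[X])-72*Polynomial.X).natDegree ≤ 1 := by compute_degree
  exact (natDegree_le_mul h1 hc).trans (by omega)

lemma master (w v : ℚ⟦X⟧) (hw0 : PowerSeries.constantCoeff w = 0)
    (huv : (1-108*w) * v = 1)
    (he : D w * D w = (1-72*w) * (v*v))
    (hDe : D (D w) = (72-3888*w) * (v*(v*v)))
    (hDv : D v = 108 * D w * (v*v))
    (k : ℕ) (hk : 1 ≤ k) :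
    ∃ T : ℕ → ℚ[X], (T 0 = 0) ∧ (∀ j, 2*k < j → T j = 0) ∧ (∀ i, (T i).natDegree ≤ k) ∧
      ∀ f : ℚ⟦X⟧, (1-108*w)^(4*k) * D^[2*k] (psSubst w f) =
        ∑ i ∈ Finset.range (2*k+3),
          aeval w (T i) * (1-108*w)^i * psSubst w (D^[i] f) := by
  have hpow : ∀ t : ℕ, (1-108*w)^t * v^t = 1 := fun t => by rw [← mul_pow, huv, one_pow]
  have hgc : ∀ (f : ℚ⟦X⟧) (i : ℕ),
      D (psSubst w (D^[i] f)) = D w * psSubst w (D^[i+1] f) := by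
    intro f i
    rw [chain hw0, Function.iterate_succ_apply', mul_comm]
  induction k, hk using Nat.le_induction with
  | base =>
    refine ⟨fun i => if i = 1 then (72-3888*Polynomial.X) else
      if i = 2 then (1-72*Polynomial.X) else 0, by simp, ?_, ?_, ?_⟩
    · intro j hj
      have h1 : j ≠ 1 := by omega
      have h2 : j ≠ 2 := by omega
      simp [h1, h2]
    · intro i
      dsimp only
      split_ifs
      · compute_degree
      · compute_degree
      · simp
    · intro f
      have h0 : D^[2*1] (psSubst w f) = D (D (psSubst w f)) := rfl
      have hi0 : D^[0] f = f := rfl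
      have hi1 : D^[1] f = D f := rfl
      have hi2 : D^[2] f = D (D f) := rfl
      have hc0 : D (psSubst w f) = D w * psSubst w (D f) := by
        have := hgc f 0
        rwa [show (0+1:ℕ) = 1 from rfl, hi0, hi1] at this
      have hc1 : D (psSubst w (D f)) = D w * psSubst w (D (D f)) := by
        have := hgc f 1
        rwa [show (1+1:ℕ) = 2 from rfl, hi1, hi2] at this
      rw [h0, hc0, D_mul, hc1, hDe]
      rw [Finset.sum_range_succ, Finset.sum_range_succ, Finset.sum_range_succ,
        Finset.sum_range_succ, Finset.sum_range_succ, Finset.sum_range_zero]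
      have ha1 : aeval w ((72:ℚ[X])-3888*Polynomial.X) = (72:ℚ⟦X⟧)-3888*w := by
        simp [map_ofNat]
      have ha2 : aeval w ((1:ℚ[X])-72*Polynomial.X) = (1:ℚ⟦X⟧)-72*w := by
        simp [map_ofNat]
      norm_num [ha1, ha2, hi1, hi2]
      linear_combination ((1-108*w)^4 * (psSubst w (D (D f)))) * he
        + ((1-72*w)*(1-108*w)^2* (psSubst w (D (D f)))) * hpow 2
        + ((72-3888*w)*(1-108*w)* (psSubst w (D f))) * hpow 3
  | succ k hk ih =>
    obtain ⟨T, hT0, hTbig, hTdeg, hTeq⟩ := ih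
    refine ⟨fun j => phi0 (T j) (4*k-j) + phi1 (T (j-1)) (4*k-(j-1)) + phi2 (T (j-2)),
      ?_, ?_, ?_, ?_⟩
    · simp [hT0, phi0_zero, phi1_zero, phi2_zero]
    · intro j hj
      have e0 : T j = 0 := hTbig j (by omega)
      have e1 : T (j-1) = 0 := hTbig (j-1) (by omega)
      have e2 : T (j-2) = 0 := hTbig (j-2) (by omega)
      simp [e0, e1, e2, phi0_zero, phi1_zero, phi2_zero]
    · intro i
      refine (natDegree_add_le _ _).trans (max_le ((natDegree_add_le _ _).trans
        (max_le ?_ ?_)) ?_)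
      · exact deg_phi0 hk (hTdeg i) _
      · exact deg_phi1 hk (hTdeg _) _
      · exact deg_phi2 (hTdeg _)
    · intro f
      simp only []
      have hIH := hTeq f
      have hDk : D^[2*k] (psSubst w f) =
          ∑ i ∈ Finset.range (2*k+3),
            v^(4*k) * (aeval w (T i) * (1-108*w)^i * psSubst w (D^[i] f)) := by
        rw [← Finset.mul_sum, ← hIH, ← mul_assoc, mul_comm (v^(4*k)), hpow (4*k), one_mul]
      have hit : D^[2*(k+1)] (psSubst w f) = D (D (D^[2*k] (psSubst w f))) := by
        rw [show 2*(k+1) = 1+(1+2*k) by ring, Function.iterate_add_apply,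
          Function.iterate_add_apply, Function.iterate_one]
      rw [hit, hDk, D_sum, D_sum, Finset.mul_sum]
      have hterm : ∀ i ∈ Finset.range (2*k+3),
          (1-108*w)^(4*(k+1)) * D (D (v^(4*k) *
            (aeval w (T i) * (1-108*w)^i * psSubst w (D^[i] f)))) =
          aeval w (phi0 (T i) (4*k-i)) * (1-108*w)^i * psSubst w (D^[i] f)
          + aeval w (phi1 (T i) (4*k-i)) * (1-108*w)^(i+1) * psSubst w (D^[i+1] f)
          + aeval w (phi2 (T i)) * (1-108*w)^(i+2) * psSubst w (D^[i+2] f) := by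
        intro i hi
        rw [Finset.mem_range] at hi
        set m := 4*k-i with hmdef
        rw [show 4*(k+1) = m+i+4 by omega, show 4*k = m+i by omega]
        exact key w v huv he hDe hDv (T i) i m _ _ _ (hgc f i) (hgc f (i+1))
      rw [Finset.sum_congr rfl hterm]
      rw [Finset.sum_add_distrib, Finset.sum_add_distrib]
      have hsplit : ∀ j, aeval w (phi0 (T j) (4*k-j) + phi1 (T (j-1)) (4*k-(j-1))
            + phi2 (T (j-2))) * (1-108*w)^j * psSubst w (D^[j] f)
          = aeval w (phi0 (T j) (4*k-j)) * (1-108*w)^j * psSubst w (D^[j] f)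
          + aeval w (phi1 (T (j-1)) (4*k-(j-1))) * (1-108*w)^j * psSubst w (D^[j] f)
          + aeval w (phi2 (T (j-2))) * (1-108*w)^j * psSubst w (D^[j] f) := by
        intro j
        rw [map_add, map_add]
        ring
      rw [Finset.sum_congr rfl fun j _ => hsplit j, Finset.sum_add_distrib,
        Finset.sum_add_distrib]
      have hzero1 : T (2*k+3) = 0 := hTbig _ (by omega)
      have hzero2 : T (2*k+4) = 0 := hTbig _ (by omega)
      congr 1
      congr 1
      · -- phi0 sums
        conv_rhs => rw [show 2*(k+1)+3 = (2*k+3)+1+1 by ring, Finset.sum_range_succ,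
          Finset.sum_range_succ]
        simp only [hzero1, hzero2, phi0_zero, map_zero, zero_mul, add_zero]
      · -- phi1 sums
        conv_rhs => rw [show 2*(k+1)+3 = (2*k+4)+1 by ring, Finset.sum_range_succ' _ (2*k+4),
          show 2*k+4 = (2*k+3)+1 by ring, Finset.sum_range_succ]
        simp only [Nat.add_sub_cancel, Nat.zero_sub, hT0, hzero1, phi1_zero, map_zero,
          zero_mul, add_zero]
      · -- phi2 sums
        conv_rhs => rw [show 2*(k+1)+3 = (2*k+4)+1 by ring, Finset.sum_range_succ' _ (2*k+4),
          show 2*k+4 = (2*k+3)+1 by ring, Finset.sum_range_succ' _ (2*k+3)]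
        have hx1 : ∀ x:ℕ, x+1+1-2 = x := fun x => by omega
        have hx2 : ∀ x:ℕ, x+1+1 = x+2 := fun x => by omega
        simp only [hx1, hx2, show (0:ℕ)+1-2 = 0 from rfl, show (0:ℕ)-2 = 0 from rfl, hT0,
          phi2_zero, map_zero, zero_mul, add_zero, pow_zero]


end Stmt1Aux

open Stmt1Aux Polynomial in
theorem stmt1 (w : PowerSeries ℚ) (hw0 : PowerSeries.constantCoeff w = 0) (hw1 : coeff 1 w = 1)
    (hw : (X : ℚ⟦X⟧) ^ 2 = w ^ 2 - 72 * w ^ 3) (k : ℕ) (hk : 1 ≤ k) :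
    ∃ T : ℕ → Polynomial ℚ,
      (∀ i ∈ Finset.Icc 1 (2 * k), (T i).natDegree ≤ k) ∧
      ∀ f : PowerSeries ℚ,
        (1 - 108 * w) ^ (4 * k) * D^[2 * k] (psSubst w f) =
          ∑ i ∈ Finset.Icc 1 (2 * k),
            Polynomial.aeval w (T i) * (1 - 108 * w) ^ i * psSubst w (D^[i] f) := by
  have h2ne : (2:ℚ⟦X⟧) ≠ 0 := by
    intro h
    have := congrArg (PowerSeries.constantCoeff (R := ℚ)) h
    rw [map_ofNat] at this
    norm_num at this
  have hwne : w ≠ 0 := by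
    intro h
    rw [h] at hw1
    simp at hw1
  have hcu : PowerSeries.constantCoeff (1-108*w) ≠ 0 := by
    simp [map_sub, map_mul, map_ofNat, hw0]
  have hune : (1-108*w) ≠ 0 := fun h => hcu (by rw [h]; simp)
  have hene : D w ≠ 0 := by
    have hc : PowerSeries.constantCoeff (D w) = 1 := by
      rw [← coeff_zero_eq_constantCoeff_apply, coeff_D]
      simpa using hw1
    intro h
    rw [h] at hc
    simp at hc
  obtain ⟨v, huv⟩ : ∃ v, (1-108*w) * v = 1 :=
    ⟨(1-108*w)⁻¹, PowerSeries.mul_inv_cancel _ hcu⟩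
  have hDsq := congrArg D hw
  rw [D_sq, D_sub, D_sq, D_mul, D_cube, D_X, D_ofNat] at hDsq
  have hR1 : w * ((1-108*w) * D w) = (X : ℚ⟦X⟧) := by
    apply mul_left_cancel₀ h2ne
    linear_combination -hDsq
  have he2 : (1-108*w)^2 * (D w * D w) = 1-72*w := by
    apply mul_left_cancel₀ (pow_ne_zero 2 hwne)
    linear_combination (w*((1-108*w)*D w) + (X:ℚ⟦X⟧))*hR1 + hw
  have he : D w * D w = (1-72*w)*(v*v) := by
    linear_combination v*v*he2 - (D w*D w)*((1-108*w)*v+1)*huv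
  have hD2 := congrArg D he2
  simp only [D_mul, D_sub, D_sq, D_one, D_ofNat 108, D_ofNat 72] at hD2
  have hstep : (1-108*w)^2 * D (D w) = 108*(1-108*w)*(D w*D w) - 36 := by
    apply mul_left_cancel₀ (mul_ne_zero h2ne hene)
    linear_combination hD2
  have hDe : D (D w) = (72-3888*w)*(v*(v*v)) := by
    apply mul_left_cancel₀ (pow_ne_zero 3 hune)
    linear_combination (1-108*w)*hstep + 108*(1-108*w)^2*he
      + (-(72-3888*w)*((1-108*w)*v)^2 + (108*(1-72*w)-(72-3888*w))*((1-108*w)*v)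
        + (108*(1-72*w)-(72-3888*w)))*huv
  have hD3 := congrArg D huv
  simp only [D_mul, D_sub, D_one, D_ofNat 108] at hD3
  have hDv : D v = 108*D w*(v*v) := by
    apply mul_left_cancel₀ hune
    linear_combination hD3 - 108*(D w)*v*huv
  obtain ⟨T, hT0, hTbig, hTdeg, hTeq⟩ := master w v hw0 huv he hDe hDv k hk
  refine ⟨T, fun i _ => hTdeg i, fun f => ?_⟩
  rw [hTeq f]
  refine (Finset.sum_subset ?_ ?_).symm
  · intro x hx
    rw [Finset.mem_Icc] at hx
    rw [Finset.mem_range]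
    omega
  · intro x hx hnx
    rw [Finset.mem_range] at hx
    rw [Finset.mem_Icc] at hnx
    have hTx : T x = 0 := by
      rcases Nat.eq_zero_or_pos x with h | h
      · rw [h]; exact hT0
      · exact hTbig x (by omega)
    rw [hTx]
    simp
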